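/- Fix naturals p ≥ 1 and s, and write q = s / p (natural division) and t = s % p. For every r : Fin p → ℕ with ∑_j r_j = s, one has ∑_j 2^(r_j) ≥ (p − t) · 2^q + t · 2^(q+1), and this bound is attained by a tuple having p − t segments of length q and t segments of length q + 1. -/

import Mathlib

lemma tangent_key (q x : ℕ) : (2:ℤ)^q * ((x:ℤ) - q + 1) ≤ 2^x := by
  rcases le_or_gt q x with h | h
  · have hd : ((x - q : ℕ) : ℤ) + 1 ≤ 2 ^ (x - q) := by
      exact_mod_cast (Nat.lt_two_pow_self (n := x - q))
    calc (2:ℤ)^q * ((x:ℤ) - q + 1) = 2^q * (((x - q : ℕ) : ℤ) + 1) := by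
          rw [Nat.cast_sub h]
      _ ≤ 2^q * 2^(x - q) := mul_le_mul_of_nonneg_left hd (by positivity)
      _ = 2^x := by rw [← pow_add, Nat.add_sub_cancel' h]
  · have h1 : (x:ℤ) - q + 1 ≤ 0 := by
      have : (x:ℤ) < q := by exact_mod_cast h
      omega
    have h2 : (2:ℤ)^q * ((x:ℤ) - q + 1) ≤ 0 :=
      mul_nonpos_of_nonneg_of_nonpos (by positivity) h1
    exact h2.trans (by positivity)

lemma filter_lt_range (p t : ℕ) (h : t ≤ p) :
    (Finset.range p).filter (fun j => j < t) = Finset.range t := by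
  ext j; simp only [Finset.mem_filter, Finset.mem_range]; omega

theorem general_optimal_value (p s : ℕ) (hp : 1 ≤ p) :
    (∀ r : Fin p → ℕ, ∑ j, r j = s →
        (p - s % p) * 2 ^ (s / p) + (s % p) * 2 ^ (s / p + 1) ≤ ∑ j, 2 ^ r j) ∧
    ∃ r : Fin p → ℕ,
      (∑ j, r j = s) ∧
      (∑ j, 2 ^ r j = (p - s % p) * 2 ^ (s / p) + (s % p) * 2 ^ (s / p + 1)) ∧
      (Finset.univ.filter fun j => r j = s / p + 1).card = s % p ∧
      (Finset.univ.filter fun j => r j = s / p).card = p - s % p := by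
  set q := s / p with hq
  set t := s % p with ht
  have htp : t < p := Nat.mod_lt _ hp
  have hdm : p * q + t = s := Nat.div_add_mod s p
  constructor
  · intro r hr
    have hsum : ∑ j, (2:ℤ)^q * ((r j : ℤ) - q + 1) ≤ ∑ j, (2:ℤ) ^ (r j) :=
      Finset.sum_le_sum fun j _ => tangent_key q (r j)
    have hL : ∑ j, (2:ℤ)^q * ((r j : ℤ) - q + 1) = 2^q * ((s:ℤ) - p*q + p) := by
      rw [← Finset.mul_sum]
      congr 1
      have : ((∑ j, r j : ℕ) : ℤ) = (s : ℤ) := by rw [hr]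
      push_cast at this ⊢
      rw [Finset.sum_add_distrib, Finset.sum_sub_distrib]
      simp [this, Finset.sum_const, mul_comm]
    have hZ : (((p - t) * 2 ^ q + t * 2 ^ (q + 1) : ℕ) : ℤ)
        ≤ ((∑ j, 2 ^ r j : ℕ) : ℤ) := by
      have hs : (s : ℤ) = p * q + t := by exact_mod_cast hdm.symm
      push_cast [Nat.cast_sub htp.le]
      calc ((p:ℤ) - t) * 2 ^ q + t * 2 ^ (q + 1)
          = 2^q * ((s:ℤ) - p*q + p) := by rw [hs]; ring
        _ = ∑ j, (2:ℤ)^q * ((r j : ℤ) - q + 1) := hL.symm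
        _ ≤ ∑ j, (2:ℤ) ^ (r j) := hsum
    exact_mod_cast hZ
  · refine ⟨fun j => if (j : ℕ) < t then q + 1 else q, ?_, ?_, ?_, ?_⟩
    · rw [Fin.sum_univ_eq_sum_range (fun j => if j < t then q + 1 else q),
        Finset.sum_ite, Finset.sum_const, Finset.sum_const,
        filter_lt_range p t htp.le]
      have : (Finset.range p).filter (fun j => ¬ j < t) =
          (Finset.range p) \ Finset.range t := by
        ext j; simp only [Finset.mem_filter, Finset.mem_sdiff, Finset.mem_range]
      rw [this, Finset.card_sdiff_of_subset (Finset.range_subset_range.mpr htp.le)]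
      simp only [Finset.card_range, smul_eq_mul]
      have hdm' : (p:ℤ)*q + t = s := by exact_mod_cast hdm
      zify [htp.le]
      linear_combination hdm'
    · rw [Fin.sum_univ_eq_sum_range (fun j => 2 ^ (if j < t then q + 1 else q))]
      have heq : ∀ j ∈ Finset.range p,
          2 ^ (if j < t then q + 1 else q) = if j < t then 2^(q+1) else 2^q := by
        intro j _; split <;> rfl
      rw [Finset.sum_congr rfl heq, Finset.sum_ite, Finset.sum_const, Finset.sum_const,
        filter_lt_range p t htp.le]
      have : (Finset.range p).filter (fun j => ¬ j < t) =
          (Finset.range p) \ Finset.range t := by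
        ext j; simp only [Finset.mem_filter, Finset.mem_sdiff, Finset.mem_range]
      rw [this, Finset.card_sdiff_of_subset (Finset.range_subset_range.mpr htp.le)]
      simp only [Finset.card_range]
      ring
    · have : (Finset.univ.filter fun j : Fin p =>
          (if (j : ℕ) < t then q + 1 else q) = q + 1) =
          Finset.univ.filter fun j : Fin p => (j : ℕ) < t := by
        ext j
        simp only [Finset.mem_filter, Finset.mem_univ, true_and]
        split <;> simp_all
      rw [this]
      rw [Finset.card_filter, Fin.sum_univ_eq_sum_range (fun j => if j < t then 1 else 0),
        Finset.sum_ite, Finset.sum_const, Finset.sum_const, filter_lt_range p t htp.le]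
      simp
    · have : (Finset.univ.filter fun j : Fin p =>
          (if (j : ℕ) < t then q + 1 else q) = q) =
          Finset.univ.filter fun j : Fin p => ¬ (j : ℕ) < t := by
        ext j
        simp only [Finset.mem_filter, Finset.mem_univ, true_and]
        split <;> simp_all
      rw [this]
      rw [Finset.card_filter, Fin.sum_univ_eq_sum_range (fun j => if ¬ j < t then 1 else 0)]
      have heq : ∀ j ∈ Finset.range p,
          (if ¬ j < t then 1 else 0) = if j < t then 0 else 1 := by
        intro j _; split <;> simp_all
      rw [Finset.sum_congr rfl heq, Finset.sum_ite, Finset.sum_const, Finset.sum_const,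
        filter_lt_range p t htp.le]
      have : (Finset.range p).filter (fun j => ¬ j < t) =
          (Finset.range p) \ Finset.range t := by
        ext j; simp only [Finset.mem_filter, Finset.mem_sdiff, Finset.mem_range]
      rw [this, Finset.card_sdiff_of_subset (Finset.range_subset_range.mpr htp.le)]
      simp
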